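/- arXiv:2001.01123 — 2 statements merged into one kernel-verified Lean document; each statement's English description precedes it below -/
import Mathlib

section
/- With p = 0.15 and q = 0.85, one has (1 + √(q/p))²·|q − Φ(√(q/p))| > 1.6153, where Φ is the standard normal distribution function. -/
open MeasureTheory Set

/-- The standard normal distribution function. -/
noncomputable def Phi (x : ℝ) : ℝ :=
  (Real.sqrt (2 * Real.pi))⁻¹ * ∫ t in Set.Iio x, Real.exp (-t ^ 2 / 2)

/-- Partial sums of the Taylor series of `exp (-u)`. -/
noncomputable def S (n : ℕ) (u : ℝ) : ℝ :=
  ∑ k ∈ Finset.range (n + 1), (-1) ^ k * u ^ k / k.factorial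

lemma S_hasDerivAt (n : ℕ) (u : ℝ) : HasDerivAt (S (n + 1)) (-(S n u)) u := by
  have h : ∀ k ∈ Finset.range (n + 2),
      HasDerivAt (fun u : ℝ => (-1 : ℝ) ^ k * u ^ k / k.factorial)
        ((-1 : ℝ) ^ k * (k * u ^ (k - 1)) / k.factorial) u := by
    intro k _
    have h1 := (hasDerivAt_pow k u).const_mul ((-1 : ℝ) ^ k / k.factorial)
    convert h1 using 1
    · exact rfl
    · exact rfl
    · funext v; ring
    · ring
  have hsum := HasDerivAt.fun_sum h
  have : (∑ k ∈ Finset.range (n + 2), (-1 : ℝ) ^ k * (k * u ^ (k - 1)) / k.factorial)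
      = -(S n u) := by
    rw [Finset.sum_range_succ']
    simp only [S, pow_zero, Nat.cast_zero, zero_mul, mul_zero, zero_div, add_zero,
      Nat.factorial_zero, Nat.cast_one, one_mul]
    rw [← Finset.sum_neg_distrib]
    apply Finset.sum_congr rfl
    intro i _
    have hfac : ((i + 1).factorial : ℝ) = (i + 1) * i.factorial := by
      exact_mod_cast Nat.factorial_succ i
    have hne : (i.factorial : ℝ) ≠ 0 := by positivity
    have hne1 : ((i : ℝ) + 1) ≠ 0 := by positivity
    have hsub : (i + 1) - 1 = i := rfl
    rw [hsub, hfac]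
    push_cast
    field_simp
    ring
  rw [← this]
  exact hsum

lemma key (n : ℕ) : ∀ u : ℝ, 0 ≤ u → 0 ≤ (-1) ^ (n + 1) * (Real.exp (-u) - S n u) := by
  induction n with
  | zero =>
    intro u hu
    have hS : S 0 u = 1 := by simp [S]
    have h1 : Real.exp (-u) ≤ 1 := by
      rw [Real.exp_le_one_iff]; linarith
    have h2 : ((-1 : ℝ)) ^ (0 + 1) = -1 := by norm_num
    rw [hS, h2]; nlinarith
  | succ n ih =>
    have hderiv : ∀ u : ℝ,
        HasDerivAt (fun u => (-1 : ℝ) ^ (n + 2) * (Real.exp (-u) - S (n + 1) u))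
          ((-1 : ℝ) ^ (n + 1) * (Real.exp (-u) - S n u)) u := by
      intro u
      have h1 : HasDerivAt (fun u : ℝ => Real.exp (-u)) (-Real.exp (-u)) u := by
        simpa [Function.comp_def] using (Real.hasDerivAt_exp (-u)).comp u (hasDerivAt_neg u)
      have h2 := S_hasDerivAt n u
      have h3 := (h1.sub h2).const_mul ((-1 : ℝ) ^ (n + 2))
      convert h3 using 1
      · exact rfl
      · exact rfl
      simp [pow_succ]
      ring
    have hmono : MonotoneOn (fun u => (-1 : ℝ) ^ (n + 2) * (Real.exp (-u) - S (n + 1) u))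
        (Set.Ici 0) := by
      apply monotoneOn_of_deriv_nonneg (convex_Ici 0)
      · exact fun u _ => (hderiv u).continuousAt.continuousWithinAt
      · intro u _
        exact (hderiv u).differentiableAt.differentiableWithinAt
      · intro u hu
        rw [(hderiv u).deriv]
        refine ih u ?_
        rw [interior_Ici] at hu
        exact le_of_lt hu
    intro u hu
    have h0 : S (n + 1) 0 = 1 := by
      rw [S, Finset.sum_range_succ']
      simp
    have hg0 : (-1 : ℝ) ^ (n + 2) * (Real.exp (-(0:ℝ)) - S (n + 1) 0) = 0 := by
      rw [h0]; simp
    have := hmono (Set.self_mem_Ici) hu hu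
    simp only at this
    calc (0:ℝ) = (-1 : ℝ) ^ (n + 2) * (Real.exp (-(0:ℝ)) - S (n + 1) 0) := hg0.symm
    _ ≤ (-1 : ℝ) ^ (n + 2) * (Real.exp (-u) - S (n + 1) u) := this
    _ = (-1 : ℝ) ^ (n + 1 + 1) * (Real.exp (-u) - S (n + 1) u) := rfl

lemma exp_lb (u : ℝ) (hu : 0 ≤ u) : S 19 u ≤ Real.exp (-u) := by
  have h := key 19 u hu
  have h20 : ((-1 : ℝ)) ^ (19 + 1) = 1 := by norm_num
  rw [h20] at h
  linarith

/-- Antiderivative of the 19th Taylor partial sum of `exp (-t²/2)`. -/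
noncomputable def G (t : ℝ) : ℝ :=
  ∑ k ∈ Finset.range 20, (-1) ^ k * t ^ (2 * k + 1) / (2 ^ k * k.factorial * (2 * k + 1))

lemma G_hasDerivAt (t : ℝ) : HasDerivAt G (S 19 (t ^ 2 / 2)) t := by
  have h : ∀ k ∈ Finset.range 20,
      HasDerivAt (fun t : ℝ => (-1 : ℝ) ^ k * t ^ (2 * k + 1) / (2 ^ k * k.factorial * (2 * k + 1)))
        ((-1 : ℝ) ^ k * (t ^ 2 / 2) ^ k / k.factorial) t := by
    intro k _
    have h1 := (hasDerivAt_pow (2 * k + 1) t).const_mul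
      ((-1 : ℝ) ^ k / (2 ^ k * k.factorial * (2 * k + 1)))
    convert h1 using 1
    · exact rfl
    · exact rfl
    · funext v; ring
    · have hsub : 2 * k + 1 - 1 = 2 * k := rfl
      rw [hsub]
      have hpow : (t ^ 2 / 2) ^ k = t ^ (2 * k) / 2 ^ k := by
        rw [div_pow, pow_mul]
      rw [hpow]
      have h2 : ((2 : ℝ) ^ k) ≠ 0 := by positivity
      have h3 : (k.factorial : ℝ) ≠ 0 := by positivity
      have h4 : ((2 * k + 1 : ℕ) : ℝ) ≠ 0 := by positivity
      push_cast
      field_simp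
  have hsum := HasDerivAt.fun_sum h
  have heq : (∑ k ∈ Finset.range 20, (-1 : ℝ) ^ k * (t ^ 2 / 2) ^ k / k.factorial)
      = S 19 (t ^ 2 / 2) := rfl
  rw [← heq]
  exact hsum

lemma integrand_integrable : Integrable (fun t : ℝ => Real.exp (-t ^ 2 / 2)) := by
  have h := integrable_exp_neg_mul_sq (b := (1/2 : ℝ)) (by norm_num)
  have heq : (fun t : ℝ => Real.exp (-(1/2) * t ^ 2)) = fun t : ℝ => Real.exp (-t ^ 2 / 2) := by
    funext t; ring_nf
  rwa [heq] at h

lemma total_integral : ∫ t : ℝ, Real.exp (-t ^ 2 / 2) = Real.sqrt (2 * Real.pi) := by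
  have h := integral_gaussian (1/2)
  have heq : (fun t : ℝ => Real.exp (-(1/2) * t ^ 2)) = fun t : ℝ => Real.exp (-t ^ 2 / 2) := by
    funext t; ring_nf
  rw [heq] at h
  rw [h, show Real.pi / (1/2) = 2 * Real.pi by ring]

lemma half_integral : ∫ t in Set.Iic (0:ℝ), Real.exp (-t ^ 2 / 2)
    = Real.sqrt (2 * Real.pi) / 2 := by
  have hkey := integral_comp_neg_Iic (c := (0:ℝ)) (f := fun t => Real.exp (-t ^ 2 / 2))
  rw [neg_zero] at hkey
  have keven : ∫ t in Set.Iic (0:ℝ), Real.exp (-t ^ 2 / 2)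
      = ∫ t in Set.Iic (0:ℝ), Real.exp (-(-t) ^ 2 / 2) := by
    apply setIntegral_congr_fun measurableSet_Iic
    intro t _
    norm_num
  have hIoi : ∫ t in Set.Ici (0:ℝ), Real.exp (-t ^ 2 / 2)
      = ∫ t in Set.Ioi (0:ℝ), Real.exp (-t ^ 2 / 2) :=
    setIntegral_congr_set Ioi_ae_eq_Ici.symm
  have hsplit := intervalIntegral.integral_Iic_add_Ioi (b := (0:ℝ))
    integrand_integrable.integrableOn integrand_integrable.integrableOn
  rw [total_integral] at hsplit
  linarith [keven, hkey, hIoi, hsplit]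

lemma Phi_formula (x : ℝ) :
    Phi x = 1/2 + (∫ t in (0:ℝ)..x, Real.exp (-t ^ 2 / 2)) / Real.sqrt (2 * Real.pi) := by
  have hIio : ∫ t in Set.Iio x, Real.exp (-t ^ 2 / 2)
      = ∫ t in Set.Iic x, Real.exp (-t ^ 2 / 2) :=
    setIntegral_congr_set Iio_ae_eq_Iic
  have hsub := intervalIntegral.integral_Iic_sub_Iic (μ := volume)
    (f := fun t : ℝ => Real.exp (-t ^ 2 / 2)) (a := (0:ℝ)) (b := x)
    integrand_integrable.integrableOn integrand_integrable.integrableOn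
  have hpos : (0:ℝ) < Real.sqrt (2 * Real.pi) :=
    Real.sqrt_pos.mpr (by positivity)
  rw [Phi, hIio]
  rw [half_integral] at hsub
  have : ∫ t in Set.Iic x, Real.exp (-t ^ 2 / 2)
      = Real.sqrt (2 * Real.pi) / 2 + ∫ t in (0:ℝ)..x, Real.exp (-t ^ 2 / 2) := by
    linarith
  rw [this]
  have hne : Real.sqrt (2 * Real.pi) ≠ 0 := ne_of_gt hpos
  rw [mul_add]
  congr 1
  · rw [inv_mul_eq_div, div_right_comm, div_self hne]
  · rw [inv_mul_eq_div]

/-- With `p = 0.15`, `q = 0.85`: `(1 + √(q/p))²·|q − Φ(√(q/p))| > 1.6153`. -/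
theorem lower_bound_A_numeric :
    (1 + Real.sqrt (0.85 / 0.15)) ^ 2 * |0.85 - Phi (Real.sqrt (0.85 / 0.15))| >
      1.6153 := by
  have h173 : (0.85 / 0.15 : ℝ) = 17 / 3 := by norm_num
  set x := Real.sqrt (0.85 / 0.15) with hxdef
  have hx0 : 0 ≤ x := Real.sqrt_nonneg _
  have hx2 : x ^ 2 = 17 / 3 := by
    rw [hxdef, h173, Real.sq_sqrt]; norm_num
  have hxl : (2.3804761 : ℝ) ≤ x := by
    rw [hxdef, h173]
    rw [show (2.3804761 : ℝ) = Real.sqrt (2.3804761 ^ 2) from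
      (Real.sqrt_sq (by norm_num)).symm]
    exact Real.sqrt_le_sqrt (by norm_num)
  have hsqpi_pos : (0:ℝ) < Real.sqrt (2 * Real.pi) := Real.sqrt_pos.mpr (by positivity)
  have hsqpi : Real.sqrt (2 * Real.pi) ≤ 2.5066286 := by
    rw [show (2.5066286 : ℝ) = Real.sqrt (2.5066286 ^ 2) from
      (Real.sqrt_sq (by norm_num)).symm]
    apply Real.sqrt_le_sqrt
    nlinarith [Real.pi_lt_d6]
  -- integral lower bound
  have hSint : IntervalIntegrable (fun t : ℝ => S 19 (t ^ 2 / 2)) volume 0 x := by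
    apply Continuous.intervalIntegrable
    unfold S
    apply continuous_finset_sum
    intro k _
    fun_prop
  have hEint : IntervalIntegrable (fun t : ℝ => Real.exp (-t ^ 2 / 2)) volume 0 x :=
    integrand_integrable.intervalIntegrable
  have hmono : ∫ t in (0:ℝ)..x, S 19 (t ^ 2 / 2)
      ≤ ∫ t in (0:ℝ)..x, Real.exp (-t ^ 2 / 2) := by
    apply intervalIntegral.integral_mono_on hx0 hSint hEint
    intro t _
    have := exp_lb (t ^ 2 / 2) (by positivity)
    calc S 19 (t ^ 2 / 2) ≤ Real.exp (-(t ^ 2 / 2)) := this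
    _ = Real.exp (-t ^ 2 / 2) := by ring_nf
  have hftc : ∫ t in (0:ℝ)..x, S 19 (t ^ 2 / 2) = G x - G 0 :=
    intervalIntegral.integral_eq_sub_of_hasDerivAt (fun t _ => G_hasDerivAt t) hSint
  have hG0 : G 0 = 0 := by
    unfold G
    apply Finset.sum_eq_zero
    intro k _
    simp
  -- G x = r * x
  have hpow : ∀ k : ℕ, x ^ (2 * k + 1) = (17/3 : ℝ) ^ k * x := by
    intro k
    rw [pow_succ, pow_mul, hx2, mul_comm]
  have hGx : G x = (25915249959445194207473080497563068205717 /
      50088040908286617579287273445009653760000 : ℝ) * x := by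
    unfold G
    simp only [Finset.sum_range_succ, Finset.sum_range_zero, hpow]
    norm_num [Nat.factorial]
    ring_nf
  have hIlb : (0.51739396 : ℝ) * x ≤ ∫ t in (0:ℝ)..x, Real.exp (-t ^ 2 / 2) := by
    rw [hftc, hGx, hG0, sub_zero] at hmono
    nlinarith [hmono, hx0]
  have hPhi : Phi x = 1/2 + (∫ t in (0:ℝ)..x, Real.exp (-t ^ 2 / 2)) / Real.sqrt (2 * Real.pi) :=
    Phi_formula x
  have hIpos : (0:ℝ) < 0.51739396 * x := by nlinarith
  have hdivlb : (0.51739396 : ℝ) * 2.3804761 / 2.5066286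
      ≤ (∫ t in (0:ℝ)..x, Real.exp (-t ^ 2 / 2)) / Real.sqrt (2 * Real.pi) := by
    apply div_le_div₀ (by nlinarith) (by nlinarith) hsqpi_pos hsqpi
  have hPhi_lb : (0.991349 : ℝ) ≤ Phi x := by
    rw [hPhi]
    have : (0.51739396 : ℝ) * 2.3804761 / 2.5066286 ≥ 0.491349 := by norm_num
    linarith
  have habs : |0.85 - Phi x| = Phi x - 0.85 := by
    rw [abs_of_nonpos (by linarith)]
    ring
  rw [habs]
  nlinarith [sq_nonneg (1 + x), hxl, hPhi_lb]
end

section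
/- For δ = 1 and p = 0.08, q = 0.92, one has q^{1/2}·(p^{3/2} + q^{3/2})/(p² + q²)·|1 − (1/p)·Φ(−√(q/p))| > 1.0135, where Φ is the standard normal distribution function. -/
set_option maxHeartbeats 1000000

open MeasureTheory Real Set Nat

-- shift lemma
lemma shift_Ioi (a : ℝ) (f : ℝ → ℝ) :
    (∫ x in Ioi (0:ℝ), f (x + a)) = ∫ x in Ioi a, f x := by
  have A : MeasurableEmbedding fun x : ℝ => x + a :=
    (Homeomorph.addRight a).isClosedEmbedding.measurableEmbedding
  have h := A.setIntegral_map (μ := volume) f (Ioi a)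
  rw [show (fun x : ℝ => x + a) ⁻¹' Ioi a = Ioi 0 by ext x; simp] at h
  rw [show Measure.map (fun x : ℝ => x + a) volume = volume from
    map_add_right_eq_self volume a] at h
  exact h.symm

-- moments
lemma moment (k : ℕ) {r : ℝ} (hr : 0 < r) :
    ∫ s in Ioi (0:ℝ), s ^ k * Real.exp (-(r * s)) = (k ! : ℝ) / r ^ (k + 1) := by
  have h := Real.integral_rpow_mul_exp_neg_mul_Ioi (a := (k:ℝ)+1) (r := r) (by positivity) hr
  rw [show ((k:ℝ)+1) - 1 = (k:ℝ) by ring] at h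
  have e : ∫ s in Ioi (0:ℝ), s ^ k * Real.exp (-(r * s))
      = ∫ t in Ioi (0:ℝ), t ^ ((k:ℝ)) * Real.exp (-(r * t)) :=
    setIntegral_congr_fun measurableSet_Ioi (fun t _ => by rw [Real.rpow_natCast])
  rw [e, h, show ((k:ℝ)+1) = ((k+1 : ℕ) : ℝ) by push_cast; ring, Real.rpow_natCast]
  push_cast
  rw [Real.Gamma_nat_eq_factorial]
  rw [div_pow, one_pow, div_mul_eq_mul_div, one_mul]

lemma moment_int (k : ℕ) {r : ℝ} (hr : 0 < r) :
    IntegrableOn (fun s : ℝ => s ^ k * Real.exp (-(r * s))) (Ioi 0) := by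
  have h := integrableOn_rpow_mul_exp_neg_mul_rpow (s := (k:ℝ)) (p := 1)
    (neg_one_lt_zero.trans_le (Nat.cast_nonneg k)) one_pos hr
  refine h.congr_fun (fun x hx => ?_) measurableSet_Ioi
  dsimp only
  rw [Real.rpow_natCast, Real.rpow_one, neg_mul]

lemma exp_neg_le_poly {x : ℝ} (hx : 0 ≤ x) :
    Real.exp (-x) ≤ 1 - x + x^2/2 - x^3/6 + x^4/24 := by
  have hQ : 1 + x + x^2/2 + x^3/6 + x^4/24 + x^5/120 ≤ Real.exp x := by
    have h := Real.sum_le_exp_of_nonneg hx 6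
    have hsum : ∑ i ∈ Finset.range 6, x^i/(i ! : ℝ)
        = 1 + x + x^2/2 + x^3/6 + x^4/24 + x^5/120 := by
      rw [Finset.sum_range_succ, Finset.sum_range_succ, Finset.sum_range_succ,
        Finset.sum_range_succ, Finset.sum_range_succ, Finset.sum_range_succ,
        Finset.sum_range_zero]
      norm_num [Nat.factorial]
    rwa [hsum] at h
  have hQ0 : (0:ℝ) < 1 + x + x^2/2 + x^3/6 + x^4/24 + x^5/120 := by positivity
  have he : 0 < Real.exp (-x) := Real.exp_pos _
  have h1 : Real.exp (-x) * Real.exp x = 1 := by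
    rw [← Real.exp_add]; simp
  have hA : Real.exp (-x) * (1 + x + x^2/2 + x^3/6 + x^4/24 + x^5/120) ≤ 1 := by
    nlinarith
  have hPQ : (1:ℝ) ≤ (1 - x + x^2/2 - x^3/6 + x^4/24) * (1 + x + x^2/2 + x^3/6 + x^4/24 + x^5/120) := by
    nlinarith [pow_nonneg hx 5, pow_nonneg hx 6, pow_nonneg hx 7, pow_nonneg hx 8, pow_nonneg hx 9]
  nlinarith

lemma key_integral {r : ℝ} (hr : 0 < r) :
    ∫ s in Ioi (0:ℝ), (1 - s^2/2 + s^4/8 - s^6/48 + s^8/384) * Real.exp (-(r*s))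
      = 1/r - 1/r^3 + 3/r^5 - 15/r^7 + 105/r^9 := by
  have i0 := moment_int 0 hr
  have i2 := moment_int 2 hr
  have i4 := moment_int 4 hr
  have i6 := moment_int 6 hr
  have i8 := moment_int 8 hr
  have e0 := moment 0 hr
  have e2 := moment 2 hr
  have e4 := moment 4 hr
  have e6 := moment 6 hr
  have e8 := moment 8 hr
  have hfun : (fun s : ℝ => (1 - s^2/2 + s^4/8 - s^6/48 + s^8/384) * Real.exp (-(r*s)))
      = fun s => (((s^0 * Real.exp (-(r*s)) - (1/2) * (s^2 * Real.exp (-(r*s))))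
        + (1/8) * (s^4 * Real.exp (-(r*s)))) - (1/48) * (s^6 * Real.exp (-(r*s))))
        + (1/384) * (s^8 * Real.exp (-(r*s))) := by
    funext s; ring
  have k2 : IntegrableOn (fun s : ℝ => 1/2 * (s^2 * Real.exp (-(r*s)))) (Ioi 0) :=
    i2.const_mul _
  have k4 : IntegrableOn (fun s : ℝ => 1/8 * (s^4 * Real.exp (-(r*s)))) (Ioi 0) :=
    i4.const_mul _
  have k6 : IntegrableOn (fun s : ℝ => 1/48 * (s^6 * Real.exp (-(r*s)))) (Ioi 0) :=
    i6.const_mul _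
  have k8 : IntegrableOn (fun s : ℝ => 1/384 * (s^8 * Real.exp (-(r*s)))) (Ioi 0) :=
    i8.const_mul _
  have j1 : IntegrableOn (fun s : ℝ => s^0 * Real.exp (-(r*s))
      - 1/2 * (s^2 * Real.exp (-(r*s)))) (Ioi 0) := i0.sub k2
  have j2 : IntegrableOn (fun s : ℝ => s^0 * Real.exp (-(r*s))
      - 1/2 * (s^2 * Real.exp (-(r*s))) + 1/8 * (s^4 * Real.exp (-(r*s)))) (Ioi 0) := j1.add k4
  have j3 : IntegrableOn (fun s : ℝ => s^0 * Real.exp (-(r*s))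
      - 1/2 * (s^2 * Real.exp (-(r*s))) + 1/8 * (s^4 * Real.exp (-(r*s)))
      - 1/48 * (s^6 * Real.exp (-(r*s)))) (Ioi 0) := j2.sub k6
  rw [hfun, integral_add j3 k8, integral_sub j2 k6, integral_add j1 k4, integral_sub i0 k2,
      integral_const_mul, integral_const_mul, integral_const_mul, integral_const_mul,
      e0, e2, e4, e6, e8]
  norm_num [Nat.factorial]
  field_simp
  ring

lemma exp_575_le : Real.exp (-5.75 : ℝ) ≤ 0.00318279 := by
  have h1 : (2.7182818283 : ℝ) < Real.exp 1 := Real.exp_one_gt_d9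
  have hS : (88793407/41943040 : ℝ) ≤ Real.exp 0.75 := by
    have h := Real.sum_le_exp_of_nonneg (by norm_num : (0:ℝ) ≤ 0.75) 9
    simp [Finset.sum_range_succ, Nat.factorial] at h
    norm_num at h ⊢
    linarith
  have heq : Real.exp (5.75:ℝ) = Real.exp 1 ^ 5 * Real.exp 0.75 := by
    rw [← Real.exp_nat_mul, ← Real.exp_add]; norm_num
  have hmul : (314.19 : ℝ) ≤ Real.exp 5.75 := by
    rw [heq]
    have h5 : (2.7182818283:ℝ)^5 ≤ Real.exp 1 ^ 5 := by
      apply pow_le_pow_left₀ (by norm_num) h1.le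
    nlinarith [Real.exp_pos (0.75:ℝ)]
  rw [show (-5.75:ℝ) = -(5.75:ℝ) by norm_num, Real.exp_neg]
  have h := inv_anti₀ (by norm_num : (0:ℝ) < 314.19) hmul
  calc (Real.exp 5.75)⁻¹ ≤ (314.19:ℝ)⁻¹ := h
    _ ≤ 0.00318279 := by norm_num


/-- For `δ = 1`, `p = 0.08`, `q = 0.92`:
`q^{1/2}·(p^{3/2} + q^{3/2})/(p² + q²)·|1 − (1/p)·Φ(−√(q/p))| > 1.0135`. -/
theorem lower_bound_K0_one_numeric :
    Real.sqrt 0.92 * (((0.08 : ℝ) ^ (3 / 2 : ℝ) + (0.92 : ℝ) ^ (3 / 2 : ℝ)) /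
        ((0.08 : ℝ) ^ 2 + (0.92 : ℝ) ^ 2)) *
      |1 - (1 / 0.08) * Phi (-Real.sqrt (0.92 / 0.08))| > 1.0135 := by
  set A := Real.sqrt (0.92 / 0.08) with hA
  have hA2 : A ^ 2 = 11.5 := by
    rw [hA, Real.sq_sqrt (by norm_num : (0:ℝ) ≤ 0.92 / 0.08)]; norm_num
  have hApos : (0:ℝ) < A := Real.sqrt_pos.mpr (by norm_num)
  have hAge : (3.3911 : ℝ) ≤ A := by nlinarith
  have hPhi0 : 0 ≤ Phi (-A) := by
    unfold Phi
    apply mul_nonneg (by positivity)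
    apply setIntegral_nonneg measurableSet_Iio
    intro t _; positivity
  -- reflect
  have hInt : (∫ t in Set.Iio (-A), Real.exp (-t ^ 2 / 2))
      = ∫ x in Ioi A, Real.exp (-x ^ 2 / 2) := by
    rw [← integral_Iic_eq_integral_Iio]
    have h := integral_comp_neg_Ioi A (fun t => Real.exp (-t ^ 2 / 2))
    rw [← h]
    exact setIntegral_congr_fun measurableSet_Ioi (fun x _ => by rw [neg_sq])
  have hshift : (∫ x in Ioi A, Real.exp (-x ^ 2 / 2))
      = ∫ s in Ioi (0:ℝ), Real.exp (-(s + A) ^ 2 / 2) :=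
    (shift_Ioi A fun x => Real.exp (-x ^ 2 / 2)).symm
  -- integrability of the dominating function
  have i0 := moment_int 0 hApos
  have i2 := moment_int 2 hApos
  have i4 := moment_int 4 hApos
  have i6 := moment_int 6 hApos
  have i8 := moment_int 8 hApos
  have j4 : IntegrableOn (fun s : ℝ => s^0 * Real.exp (-(A*s))
      - 1/2 * (s^2 * Real.exp (-(A*s))) + 1/8 * (s^4 * Real.exp (-(A*s)))
      - 1/48 * (s^6 * Real.exp (-(A*s))) + 1/384 * (s^8 * Real.exp (-(A*s)))) (Ioi 0) :=
    ((((i0.sub (i2.const_mul _)).add (i4.const_mul _)).sub (i6.const_mul _)).add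
      (i8.const_mul _))
  have ig : IntegrableOn (fun s : ℝ =>
      (1 - s^2/2 + s^4/8 - s^6/48 + s^8/384) * Real.exp (-(A*s))) (Ioi 0) :=
    j4.congr_fun (fun s _ => by ring) measurableSet_Ioi
  have ig' : IntegrableOn (fun s : ℝ => Real.exp (-5.75) *
      ((1 - s^2/2 + s^4/8 - s^6/48 + s^8/384) * Real.exp (-(A*s)))) (Ioi 0) :=
    ig.const_mul _
  -- pointwise bound and monotonicity
  have hmono : (∫ s in Ioi (0:ℝ), Real.exp (-(s + A) ^ 2 / 2))
      ≤ ∫ s in Ioi (0:ℝ), Real.exp (-5.75) *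
          ((1 - s^2/2 + s^4/8 - s^6/48 + s^8/384) * Real.exp (-(A*s))) := by
    apply integral_mono_of_nonneg
    · exact ae_of_all _ fun s => (Real.exp_pos _).le
    · exact ig'
    · refine (ae_restrict_iff' measurableSet_Ioi).mpr (ae_of_all _ fun s hs => ?_)
      have hs0 : (0:ℝ) ≤ s := le_of_lt hs
      have h1 : Real.exp (-(s + A) ^ 2 / 2)
          = Real.exp (-5.75) * (Real.exp (-(A*s)) * Real.exp (-(s^2/2))) := by
        rw [← Real.exp_add, ← Real.exp_add]
        congr 1
        nlinarith
      have h2 := exp_neg_le_poly (x := s^2/2) (by positivity)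
      have h2' : Real.exp (-(s^2/2)) ≤ 1 - s^2/2 + s^4/8 - s^6/48 + s^8/384 := by
        calc Real.exp (-(s^2/2)) ≤ 1 - s^2/2 + (s^2/2)^2/2 - (s^2/2)^3/6 + (s^2/2)^4/24 := h2
          _ = 1 - s^2/2 + s^4/8 - s^6/48 + s^8/384 := by ring
      show Real.exp (-(s + A) ^ 2 / 2) ≤ Real.exp (-5.75) *
        ((1 - s^2/2 + s^4/8 - s^6/48 + s^8/384) * Real.exp (-(A*s)))
      rw [h1]
      nlinarith [mul_le_mul_of_nonneg_left h2'
        (mul_pos (Real.exp_pos (-5.75:ℝ)) (Real.exp_pos (-(A*s)))).le]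
  -- value of the dominating integral
  have hval : (∫ s in Ioi (0:ℝ), Real.exp (-5.75) *
        ((1 - s^2/2 + s^4/8 - s^6/48 + s^8/384) * Real.exp (-(A*s))))
      = Real.exp (-5.75) * (1/A - 1/A^3 + 3/A^5 - 15/A^7 + 105/A^9) := by
    rw [integral_const_mul, key_integral hApos]
  -- collapse powers of A
  have hA5 : A^5 = 132.25 * A := by
    have h : A^5 = (A^2)^2 * A := by ring
    rw [h, hA2]; norm_num
  have hA3 : A^3 = 11.5 * A := by
    have h : A^3 = A^2 * A := by ring
    rw [h, hA2]
  have hA7 : A^7 = 1520.875 * A := by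
    have h : A^7 = (A^2)^3 * A := by ring
    rw [h, hA2]; norm_num
  have hA9 : A^9 = 17490.0625 * A := by
    have h : A^9 = (A^2)^4 * A := by ring
    rw [h, hA2]; norm_num
  have hsum : 1/A - 1/A^3 + 3/A^5 - 15/A^7 + 105/A^9 = (260775/279841) * (1/A) := by
    rw [hA3, hA5, hA7, hA9]
    field_simp
    ring
  -- numeric bounds
  have hsqrt2pi : (2.506628 : ℝ) ≤ Real.sqrt (2 * Real.pi) := by
    have hp : (6.283184 : ℝ) ≤ 2 * Real.pi := by nlinarith [Real.pi_gt_d6]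
    nlinarith [Real.sqrt_nonneg (2*Real.pi),
      Real.sq_sqrt (by positivity : (0:ℝ) ≤ 2*Real.pi)]
  have hinv : (Real.sqrt (2*Real.pi))⁻¹ ≤ (2.506628:ℝ)⁻¹ :=
    inv_anti₀ (by norm_num) hsqrt2pi
  have h1A : 1/A ≤ 1/3.3911 := by
    apply one_div_le_one_div_of_le (by norm_num) hAge
  have hPhiA : Phi (-A) ≤ 0.000349 := by
    have hbound : Phi (-A) ≤ (Real.sqrt (2*Real.pi))⁻¹ *
        (Real.exp (-5.75) * (1/A - 1/A^3 + 3/A^5 - 15/A^7 + 105/A^9)) := by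
      unfold Phi
      apply mul_le_mul_of_nonneg_left _ (by positivity)
      rw [hInt, hshift]
      exact hmono.trans (le_of_eq hval)
    calc Phi (-A) ≤ _ := hbound
      _ = (Real.sqrt (2*Real.pi))⁻¹ * Real.exp (-5.75) * ((260775/279841) * (1/A)) := by
          rw [hsum]; ring
      _ ≤ (2.506628:ℝ)⁻¹ * 0.00318279 * ((260775/279841) * (1/3.3911)) := by
          have t1 : (Real.sqrt (2*Real.pi))⁻¹ * Real.exp (-5.75)
              ≤ (2.506628:ℝ)⁻¹ * 0.00318279 :=
            mul_le_mul hinv exp_575_le (Real.exp_pos _).le (by norm_num)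
          have t2 : (260775/279841 : ℝ) * (1/A) ≤ (260775/279841 : ℝ) * (1/3.3911) :=
            mul_le_mul_of_nonneg_left h1A (by norm_num)
          exact mul_le_mul t1 t2 (by positivity) (by positivity)
      _ ≤ 0.000349 := by norm_num
  -- rpow to sqrt
  have h08 : (0.08:ℝ) ^ (3/2 : ℝ) = 0.08 * Real.sqrt 0.08 := by
    rw [show (3/2 : ℝ) = 1 + 1/2 by norm_num,
      Real.rpow_add (by norm_num : (0:ℝ) < 0.08), Real.rpow_one,
      ← Real.sqrt_eq_rpow]
  have h92 : (0.92:ℝ) ^ (3/2 : ℝ) = 0.92 * Real.sqrt 0.92 := by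
    rw [show (3/2 : ℝ) = 1 + 1/2 by norm_num,
      Real.rpow_add (by norm_num : (0:ℝ) < 0.92), Real.rpow_one,
      ← Real.sqrt_eq_rpow]
  have hs08 : (0.2828427:ℝ) ≤ Real.sqrt 0.08 := by
    nlinarith [Real.sq_sqrt (show (0:ℝ) ≤ 0.08 by norm_num), Real.sqrt_nonneg (0.08:ℝ)]
  have hs92 : (0.9591663:ℝ) ≤ Real.sqrt 0.92 := by
    nlinarith [Real.sq_sqrt (show (0:ℝ) ≤ 0.92 by norm_num), Real.sqrt_nonneg (0.92:ℝ)]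
  have habs : |1 - (1 / 0.08) * Phi (-A)| = 1 - 12.5 * Phi (-A) := by
    rw [show (1/0.08 : ℝ) = 12.5 by norm_num, abs_of_nonneg (by nlinarith)]
  rw [h08, h92, habs, show ((0.08:ℝ)^2 + 0.92^2) = 0.8528 by norm_num]
  set P := Phi (-A) with hP
  set u := Real.sqrt 0.08 with hu
  set v := Real.sqrt 0.92 with hv
  have hkey : (1.0135:ℝ) < 0.9591663 * ((0.08*0.2828427 + 0.92*0.9591663)/0.8528)
      * (1 - 12.5*0.000349) := by norm_num
  refine lt_of_lt_of_le hkey ?_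
  have hu0 : (0:ℝ) ≤ u := Real.sqrt_nonneg _
  have hv0 : (0:ℝ) ≤ v := Real.sqrt_nonneg _
  have c3 : (1:ℝ) - 12.5*0.000349 ≤ 1 - 12.5*P := by linarith
  have c2 : (0.08*0.2828427 + 0.92*0.9591663 : ℝ)/0.8528 ≤ (0.08*u + 0.92*v)/0.8528 := by
    gcongr
    all_goals linarith
  have step1 : (0.9591663:ℝ) * ((0.08*0.2828427 + 0.92*0.9591663)/0.8528)
      ≤ v * ((0.08*u + 0.92*v)/0.8528) :=
    mul_le_mul hs92 c2 (by norm_num) hv0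
  exact mul_le_mul step1 c3 (by norm_num) (by positivity)
end
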